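/- Unique node IDs from a strict total edge ordering (Lemma 1, combinatorial core): with the BFS node-ID assignment h defined from the injective edge labeling L on a connected directed multigraph with root r, the map h : V → List ℕ is injective; i.e., every node of the connected multigraph receives a unique ID. -/

import Mathlib

open scoped Classical

/-- The simple graph underlying a directed multigraph with edge sources `src` and targets
`tgt`: `u ~ v` iff `u ≠ v` and there is an edge `e` with (`src e = u` and `tgt e = v`) or
(`src e = v` and `tgt e = u`). -/
def mgGraph {V : Type*} {Ed : Type*} (src tgt : Ed → V) : SimpleGraph V where
  Adj u v := u ≠ v ∧ ∃ e : Ed, (src e = u ∧ tgt e = v) ∨ (src e = v ∧ tgt e = u)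
  symm := by
    refine ⟨?_⟩
    rintro u v ⟨hne, e, he⟩
    exact ⟨hne.symm, e, he.symm⟩
  loopless := by
    refine ⟨?_⟩
    rintro v ⟨hne, -⟩
    exact hne rfl

/-- The code `c(u, v)`: the minimum of the set
`{L e : src e = u, tgt e = v} ∪ {m + L e : src e = v, tgt e = u}`
(which is nonempty and finite whenever `u ~ v`). -/
noncomputable def mgCode {V : Type*} {Ed : Type*} (src tgt : Ed → V) (L : Ed → ℕ) (m : ℕ)
    (u v : V) : ℕ :=
  sInf ({x | ∃ e : Ed, src e = u ∧ tgt e = v ∧ L e = x} ∪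
        {x | ∃ e : Ed, src e = v ∧ tgt e = u ∧ m + L e = x})

/-- Auxiliary BFS assignment, recursing on a distance bound `k`: at level `k + 1`, a
non-root vertex `v` receives the lexicographically least list `h(u) ++ [c(u, v)]` over
the neighbors `u ~ v` with `d(u) = d(v) − 1`. -/
noncomputable def bfsAux {V : Type*} [Fintype V] {Ed : Type*} [Fintype Ed]
    (src tgt : Ed → V) (L : Ed → ℕ) (m : ℕ) (r : V) : ℕ → V → List ℕ
  | 0, _ => [1]
  | k + 1, v =>
    if v = r then [1]
    else
      WithTop.untopD [] ((Finset.univ.filter (fun u : V => (mgGraph src tgt).Adj u v ∧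
            (mgGraph src tgt).dist r u = (mgGraph src tgt).dist r v - 1)).image
          (fun u => bfsAux src tgt L m r k u ++ [mgCode src tgt L m u v])).min

/-- The BFS node-ID assignment `h : V → List ℕ`, defined by strong induction on the
distance `d(v) = dist_G(r, v)` from the root: `h(r) = [1]`, and for `v ≠ r`, `h(v)` is the
lexicographically least list in `{ h(u) ++ [c(u, v)] : u ~ v and d(u) = d(v) − 1 }`. -/
noncomputable def bfsNodeID {V : Type*} [Fintype V] {Ed : Type*} [Fintype Ed]
    (src tgt : Ed → V) (L : Ed → ℕ) (m : ℕ) (r : V) (v : V) : List ℕ :=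
  bfsAux src tgt L m r ((mgGraph src tgt).dist r v) v

section Aux
variable {V : Type*} [Fintype V] {Ed : Type*} [Fintype Ed]
variable (src tgt : Ed → V) (L : Ed → ℕ) (m : ℕ) (r : V)

omit [Fintype V] [Fintype Ed] in
lemma mgCode_mem {u v : V} (h : (mgGraph src tgt).Adj u v) :
    mgCode src tgt L m u v ∈
      ({x | ∃ e : Ed, src e = u ∧ tgt e = v ∧ L e = x} ∪
       {x | ∃ e : Ed, src e = v ∧ tgt e = u ∧ m + L e = x}) := by
  apply Nat.sInf_mem
  obtain ⟨-, e, he | he⟩ := h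
  · exact ⟨L e, Or.inl ⟨e, he.1, he.2, rfl⟩⟩
  · exact ⟨m + L e, Or.inr ⟨e, he.1, he.2, rfl⟩⟩

omit [Fintype V] [Fintype Ed] in
lemma mgCode_right_injective (hinj : Function.Injective L)
    (hge : ∀ e, 1 ≤ L e) (hle : ∀ e, L e ≤ m) {u v w : V}
    (hv : (mgGraph src tgt).Adj u v) (hw : (mgGraph src tgt).Adj u w)
    (hcode : mgCode src tgt L m u v = mgCode src tgt L m u w) : v = w := by
  have h1 := mgCode_mem src tgt L m hv
  have h2 := mgCode_mem src tgt L m hw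
  rw [hcode] at h1
  rcases h1 with ⟨e, he1, he2, he3⟩ | ⟨e, he1, he2, he3⟩ <;>
    rcases h2 with ⟨f, hf1, hf2, hf3⟩ | ⟨f, hf1, hf2, hf3⟩
  · have : e = f := hinj (by omega)
    subst this; rw [← he2, hf2]
  · have := hle e; have := hge f; omega
  · have := hle f; have := hge e; omega
  · have : e = f := hinj (by omega)
    subst this; rw [← he1, hf1]

omit [Fintype V] [Fintype Ed] in
lemma exists_parent (hconn : (mgGraph src tgt).Connected) {v : V} (hv : v ≠ r) :
    ∃ u : V, (mgGraph src tgt).Adj u v ∧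
      (mgGraph src tgt).dist r u = (mgGraph src tgt).dist r v - 1 := by
  set G := mgGraph src tgt with hG
  have hd : G.dist r v ≠ 0 := fun h => hv ((hconn.dist_eq_zero_iff.mp h).symm)
  obtain ⟨p, hp⟩ := (hconn r v).exists_walk_length_eq_dist
  obtain ⟨k, hk⟩ := Nat.exists_eq_succ_of_ne_zero hd
  rw [hk] at hp
  cases hq : p.reverse with
  | nil =>
    exfalso
    have h0 : p.reverse.length = 0 := by rw [hq]; rfl
    rw [SimpleGraph.Walk.length_reverse, hp] at h0
    exact Nat.succ_ne_zero _ h0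
  | cons hadj q =>
    rename_i u
    refine ⟨u, hadj.symm, ?_⟩
    have hql : q.length = k := by
      have h1 : p.reverse.length = q.length + 1 := by rw [hq]; simp
      rw [SimpleGraph.Walk.length_reverse, hp] at h1
      omega
    have h1 : G.dist r u ≤ k := by
      have := G.dist_le q.reverse
      simpa [hql] using this
    have h2 : G.dist r v ≤ G.dist r u + 1 := by
      have ht := hconn.dist_triangle (u := r) (v := u) (w := v)
      have huv : G.dist u v ≤ 1 := by
        have := G.dist_le (hadj.symm.toWalk)
        simpa using this
      omega
    omega

lemma bfsNodeID_spec (hconn : (mgGraph src tgt).Connected) {v : V} (hv : v ≠ r) :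
    ∃ u : V, (mgGraph src tgt).Adj u v ∧
      (mgGraph src tgt).dist r u = (mgGraph src tgt).dist r v - 1 ∧
      bfsNodeID src tgt L m r v =
        bfsNodeID src tgt L m r u ++ [mgCode src tgt L m u v] := by
  have hd : (mgGraph src tgt).dist r v ≠ 0 :=
    fun h => hv ((hconn.dist_eq_zero_iff.mp h).symm)
  obtain ⟨k, hk⟩ := Nat.exists_eq_succ_of_ne_zero hd
  obtain ⟨u₀, hu₀⟩ := exists_parent src tgt r hconn hv
  set s := Finset.univ.filter (fun u : V => (mgGraph src tgt).Adj u v ∧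
      (mgGraph src tgt).dist r u = (mgGraph src tgt).dist r v - 1) with hs
  have hsne : s.Nonempty := ⟨u₀, Finset.mem_filter.mpr ⟨Finset.mem_univ _, hu₀⟩⟩
  set t := s.image (fun u => bfsAux src tgt L m r k u ++ [mgCode src tgt L m u v]) with ht
  have htne : t.Nonempty := hsne.image _
  obtain ⟨b, hbmem, hbmin⟩ : ∃ b ∈ t, t.min = (b : WithTop (List ℕ)) :=
    ⟨t.min' htne, t.min'_mem htne, (t.coe_min' htne).symm⟩
  obtain ⟨u, hus, hub⟩ := Finset.mem_image.mp hbmem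
  have hus' : (mgGraph src tgt).Adj u v ∧
      (mgGraph src tgt).dist r u = (mgGraph src tgt).dist r v - 1 :=
    (Finset.mem_filter.mp hus).2
  refine ⟨u, hus'.1, hus'.2, ?_⟩
  have hIDu : bfsNodeID src tgt L m r u = bfsAux src tgt L m r k u := by
    rw [bfsNodeID, hus'.2, hk]
    rfl
  have hID : bfsNodeID src tgt L m r v = bfsAux src tgt L m r (k + 1) v := by
    rw [bfsNodeID, hk]
  rw [hID, hIDu]
  show (if v = r then [1] else WithTop.untopD [] t.min) = _
  rw [if_neg hv, hbmin, ← hub]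
  rfl

lemma bfsNodeID_length (hconn : (mgGraph src tgt).Connected) (v : V) :
    (bfsNodeID src tgt L m r v).length = (mgGraph src tgt).dist r v + 1 := by
  suffices H : ∀ n v, (mgGraph src tgt).dist r v = n →
      (bfsNodeID src tgt L m r v).length = n + 1 from H _ v rfl
  intro n
  induction n using Nat.strong_induction_on with
  | _ n ih =>
    intro v hn
    by_cases hv : v = r
    · have h0 : (mgGraph src tgt).dist r v = 0 := by rw [hv]; simp
      rw [h0] at hn; subst hn
      have hID : bfsNodeID src tgt L m r v = [1] := by rw [bfsNodeID, h0]; rfl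
      rw [hID]
      rfl
    · obtain ⟨u, hadj, hdu, heq⟩ := bfsNodeID_spec src tgt L m r hconn hv
      have hd : (mgGraph src tgt).dist r v ≠ 0 :=
        fun h0 => hv ((hconn.dist_eq_zero_iff.mp h0).symm)
      rw [heq]
      have hlt : (mgGraph src tgt).dist r u < n := by omega
      have hlu := ih _ hlt u rfl
      simp only [List.length_append, List.length_singleton, hlu]
      omega

end Aux

/-- **Unique node IDs from a strict total edge ordering** (Lemma 1, combinatorial core):
on a connected directed multigraph with root `r` and an edge labeling `L` that is a
bijection onto `{1, …, m}` (encoding a strict total ordering of the edges), the BFS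
node-ID assignment `h : V → List ℕ` is injective, i.e. every node receives a unique ID. -/
theorem bfsNodeID_injective {V : Type*} [Fintype V] {Ed : Type*} [Fintype Ed] [Nonempty Ed]
    (src tgt : Ed → V) (L : Ed → ℕ)
    (hL : Set.BijOn L Set.univ (Set.Icc 1 (Fintype.card Ed)))
    (r : V) (hconn : (mgGraph src tgt).Connected) :
    Function.Injective (bfsNodeID src tgt L (Fintype.card Ed) r) := by
  set m := Fintype.card Ed
  have hinj : Function.Injective L := fun a b h =>
    hL.injOn (Set.mem_univ a) (Set.mem_univ b) h
  have hge : ∀ e, 1 ≤ L e := fun e => (hL.mapsTo (Set.mem_univ e)).1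
  have hle : ∀ e, L e ≤ m := fun e => (hL.mapsTo (Set.mem_univ e)).2
  suffices H : ∀ n v w, (mgGraph src tgt).dist r v = n →
      bfsNodeID src tgt L m r v = bfsNodeID src tgt L m r w → v = w by
    intro v w h
    exact H _ v w rfl h
  intro n
  induction n using Nat.strong_induction_on with
  | _ n ih =>
    intro v w hn h
    have hlv := bfsNodeID_length src tgt L m r hconn v
    have hlw := bfsNodeID_length src tgt L m r hconn w
    rw [h] at hlv
    have hdvw : (mgGraph src tgt).dist r v = (mgGraph src tgt).dist r w := by omega
    by_cases hv : v = r
    · have h0 : (mgGraph src tgt).dist r w = 0 := by rw [← hdvw, hv]; simp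
      exact hv.trans (hconn.dist_eq_zero_iff.mp h0)
    · have hw : w ≠ r := by
        intro hw
        have h0 : (mgGraph src tgt).dist r v = 0 := by rw [hdvw, hw]; simp
        exact hv (hconn.dist_eq_zero_iff.mp h0).symm
      obtain ⟨u, hadjv, hdu, heqv⟩ := bfsNodeID_spec src tgt L m r hconn hv
      obtain ⟨u', hadjw, hdu', heqw⟩ := bfsNodeID_spec src tgt L m r hconn hw
      rw [heqv, heqw] at h
      have hlen : (bfsNodeID src tgt L m r u).length =
          (bfsNodeID src tgt L m r u').length := by
        rw [bfsNodeID_length src tgt L m r hconn u, bfsNodeID_length src tgt L m r hconn u',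
          hdu, hdu', hdvw]
      obtain ⟨huu, hcc⟩ := List.append_inj h hlen
      have hdne : (mgGraph src tgt).dist r v ≠ 0 :=
        fun h0 => hv ((hconn.dist_eq_zero_iff.mp h0).symm)
      have huu' : u = u' := ih ((mgGraph src tgt).dist r u) (by omega) u u' rfl huu
      subst huu'
      have hc : mgCode src tgt L m u v = mgCode src tgt L m u w := by
        simpa using hcc
      exact mgCode_right_injective src tgt L m hinj hge hle hadjv hadjw hc
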